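/- Let 1 ≤ u ≤ v and 1 ≤ k ≤ n, and suppose C(n-1, k) ≥ u - 1. Let F consist of all k-element subsets of [n] containing the element 1 together with any u - 1 pairwise distinct k-element subsets of [n] not containing the element 1. Then F is (u,v)-union-intersecting and |F| = C(n-1, k-1) + u - 1. -/

import Mathlib

/-- A family `F` is `(u,v)`-union-intersecting if for any `u + v` pairwise distinct
members `F₁, …, F_u, G₁, …, G_v ∈ F` one has
`(F₁ ∪ ⋯ ∪ F_u) ∩ (G₁ ∪ ⋯ ∪ G_v) ≠ ∅`. -/
def UnionIntersecting (u v : ℕ) (F : Finset (Finset ℕ)) : Prop :=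
  ∀ S T : Finset (Finset ℕ), S ⊆ F → T ⊆ F → Disjoint S T →
    S.card = u → T.card = v → (S.sup id ∩ T.sup id).Nonempty

lemma star_card (k n : ℕ) (hk : 1 ≤ k) (hkn : k ≤ n) :
    ((Finset.Icc 1 n).powerset.filter (fun A => A.card = k ∧ 1 ∈ A)).card
      = (n - 1).choose (k - 1) := by
  have h : ((Finset.Icc 2 n).powersetCard (k-1)).card = (n-1).choose (k-1) := by
    rw [Finset.card_powersetCard, Nat.card_Icc]
    congr 1
  rw [← h]
  apply Finset.card_nbij (i := fun A => A.erase 1)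
  · intro A hA
    simp only [Finset.mem_coe, Finset.mem_filter, Finset.mem_powerset] at hA
    obtain ⟨hsub, hcard, h1⟩ := hA
    simp only [Finset.mem_coe, Finset.mem_powersetCard]
    constructor
    · intro x hx
      simp only [Finset.mem_erase] at hx
      have := hsub hx.2
      simp only [Finset.mem_Icc] at this ⊢
      omega
    · rw [Finset.card_erase_of_mem h1, hcard]
  · intro A hA B hB hAB
    simp only [Finset.coe_filter, Set.mem_setOf_eq, Finset.mem_powerset] at hA hB
    have : insert 1 (A.erase 1) = insert 1 (B.erase 1) := congrArg (insert 1) hAB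
    rwa [Finset.insert_erase hA.2.2, Finset.insert_erase hB.2.2] at this
  · intro B hB
    simp only [Finset.mem_coe, Finset.mem_powersetCard] at hB
    obtain ⟨hsub, hcard⟩ := hB
    have h1B : 1 ∉ B := by
      intro h
      have := hsub h
      simp only [Finset.mem_Icc] at this
      omega
    refine ⟨insert 1 B, ?_, ?_⟩
    · simp only [Finset.coe_filter, Set.mem_setOf_eq, Finset.mem_powerset]
      refine ⟨?_, ?_, Finset.mem_insert_self 1 B⟩
      · intro x hx
        rcases Finset.mem_insert.mp hx with h | h
        · simp only [Finset.mem_Icc]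
          omega
        · have := hsub h
          simp only [Finset.mem_Icc] at this ⊢
          omega
      · rw [Finset.card_insert_of_notMem h1B, hcard]
        omega
    · simp [Finset.erase_insert h1B]

theorem uv_union_intersecting_construction (u v k n : ℕ) (hu : 1 ≤ u)
    (huv : u ≤ v) (hk : 1 ≤ k) (hkn : k ≤ n)
    (hchoose : u - 1 ≤ (n - 1).choose k)
    (G : Finset (Finset ℕ)) (hGcard : G.card = u - 1)
    (hG : ∀ A ∈ G, A ⊆ Finset.Icc 1 n ∧ A.card = k ∧ 1 ∉ A)
    (F : Finset (Finset ℕ))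
    (hF : F = (Finset.Icc 1 n).powerset.filter (fun A => A.card = k ∧ 1 ∈ A) ∪ G) :
    UnionIntersecting u v F ∧ F.card = (n - 1).choose (k - 1) + u - 1 := by
  set star := (Finset.Icc 1 n).powerset.filter (fun A => A.card = k ∧ 1 ∈ A) with hstar
  have key : ∀ S : Finset (Finset ℕ), S ⊆ F → u ≤ S.card → ∃ A ∈ S, 1 ∈ A := by
    intro S hS hcard
    by_contra h
    push_neg at h
    have hSG : S ⊆ G := by
      intro A hA
      have := hS hA
      rw [hF] at this
      rcases Finset.mem_union.mp this with hm | hm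
      · exact absurd (Finset.mem_filter.mp hm).2.2 (h A hA)
      · exact hm
    have := Finset.card_le_card hSG
    omega
  constructor
  · intro S T hS hT _ hScard hTcard
    obtain ⟨A, hAS, hA1⟩ := key S hS (by omega)
    obtain ⟨B, hBT, hB1⟩ := key T hT (by omega)
    refine ⟨1, Finset.mem_inter.mpr ⟨?_, ?_⟩⟩
    · exact Finset.mem_sup.mpr ⟨A, hAS, hA1⟩
    · exact Finset.mem_sup.mpr ⟨B, hBT, hB1⟩
  · have hdisj : Disjoint star G := by
      rw [Finset.disjoint_left]
      intro A hA hAG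
      exact (hG A hAG).2.2 (Finset.mem_filter.mp hA).2.2
    rw [hF, Finset.card_union_of_disjoint hdisj, star_card k n hk hkn, hGcard]
    omega
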